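/- Let $k$ be a local field with uniformizer $\varpi$, $\mathcal{M}$ a topological monoid, and $(V,\rho)$ a strictly Cartesian unitary representation over $k$. Define $A_0 := k^{\circ}[\mathcal{M}]$ and inductively $A_{i+1} := A_i + \varpi^{-1}\ker(\Pi \circ k[\rho]|_{A_i})$, where $\Pi : \mathrm{B}_k(V)(1) \to \mathrm{End}_{\bar k}(\overline{V})$ is the reduction map. Then $\bigcup_{i \in \mathbb{N}} A_i = k[\rho]^{-1}(\mathrm{B}_k(V)(1))$, and consequently the reduction $\overline{\mathcal{A}}$ of the closure $\mathcal{A}$ of the image of $k[\mathcal{M}]$ in $\mathrm{B}_k(V)$ equals $\bigcup_{i\in\mathbb{N}} \alpha_i$ where $\alpha_i := \mathrm{im}(\Pi \circ k[\rho]|_{A_i})$. -/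

import Mathlib

variable {k M V : Type*} [NontriviallyNormedField k] [Monoid M]
  [NormedAddCommGroup V] [NormedSpace k V]

/-- The increasing sequence of integral models `A₀ = k°[ℳ] ⊆ A₁ ⊆ A₂ ⊆ ⋯` of the monoid
algebra, where `A_{i+1} = A_i + ϖ⁻¹ ker(Π ∘ k[ρ]|_{A_i})`: here `L = k[ρ]` is the linear
extension of `ρ` and `ker(Π ∘ L|_{A_i})` consists of the `h ∈ A_i` with `‖L h‖ < 1`. -/
def Aseq (L : MonoidAlgebra k M →ₐ[k] (V →L[k] V)) (ϖ : k) : ℕ → Set (MonoidAlgebra k M)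
  | 0 => {f | ∀ m : M, ‖f.coeff m‖ ≤ 1}
  | i + 1 => {x | ∃ g ∈ Aseq L ϖ i, ∃ h ∈ Aseq L ϖ i, ‖L h‖ < 1 ∧ x = g + ϖ⁻¹ • h}

lemma Aseq.zero_mem (L : MonoidAlgebra k M →ₐ[k] (V →L[k] V)) (ϖ : k) :
    ∀ i, (0 : MonoidAlgebra k M) ∈ Aseq L ϖ i := by
  intro i
  induction i with
  | zero => simp [Aseq]
  | succ i ih =>
      exact ⟨0, ih, 0, ih, by simp [map_zero], by simp⟩

/-- In an ultrametric normed space, the operator norm satisfies the strong triangle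
inequality. -/
lemma opNorm_add_le_max' [IsUltrametricDist V] (A B : V →L[k] V) :
    ‖A + B‖ ≤ max ‖A‖ ‖B‖ := by
  refine ContinuousLinearMap.opNorm_le_bound _ (le_max_of_le_left (norm_nonneg _)) fun v => ?_
  calc ‖(A + B) v‖ = ‖A v + B v‖ := rfl
    _ ≤ max ‖A v‖ ‖B v‖ := IsUltrametricDist.norm_add_le_max _ _
    _ ≤ max ‖A‖ ‖B‖ * ‖v‖ := by
        refine max_le ?_ ?_
        · exact (A.le_opNorm v).trans
            (mul_le_mul_of_nonneg_right (le_max_left _ _) (norm_nonneg v))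
        · exact (B.le_opNorm v).trans
            (mul_le_mul_of_nonneg_right (le_max_right _ _) (norm_nonneg v))

/-- Let `k` be a local field with uniformizer `ϖ`, `ℳ` a topological monoid and `(V, ρ)` a
strictly Cartesian unitary representation. Then `⋃ᵢ Aᵢ = k[ρ]⁻¹(B_k(V)(1))`, and
consequently the reduction of the closure `𝒜` of the image of `k[ℳ]` in `B_k(V)` is
`⋃ᵢ αᵢ` with `αᵢ = im(Π ∘ k[ρ]|_{Aᵢ})`: every element of `𝒜(1)` agrees modulo `𝒜(1-)`
(i.e. up to norm `< 1`) with the image of an element of some `Aᵢ`. -/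
theorem union_Aseq_eq_preimage_unitBall {k M V : Type*}
    [NontriviallyNormedField k] [CompleteSpace k] [IsUltrametricDist k] [ProperSpace k]
    (ϖ : k) (hϖ0 : 0 < ‖ϖ‖) (hϖ1 : ‖ϖ‖ < 1)
    (hdisc : ∀ x : k, x ≠ 0 → ∃ n : ℤ, ‖x‖ = ‖ϖ‖ ^ n)
    [Monoid M] [TopologicalSpace M] [ContinuousMul M]
    [NormedAddCommGroup V] [NormedSpace k V] [CompleteSpace V] [IsUltrametricDist V]
    (ρ : M →* (V →L[k] V)) (hunit : ∀ m : M, ‖ρ m‖ ≤ 1)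
    (hcont : Continuous fun p : M × V => ρ p.1 p.2)
    (hcart : ∀ v : V, ∃ c : k, ‖v‖ = ‖c‖) :
    (⋃ i, Aseq (MonoidAlgebra.lift k (V →L[k] V) M ρ) ϖ i) =
      {f : MonoidAlgebra k M | ‖MonoidAlgebra.lift k (V →L[k] V) M ρ f‖ ≤ 1} ∧
    ∀ T ∈ closure (Set.range fun f : MonoidAlgebra k M =>
        MonoidAlgebra.lift k (V →L[k] V) M ρ f), ‖T‖ ≤ 1 →
      ∃ i, ∃ f ∈ Aseq (MonoidAlgebra.lift k (V →L[k] V) M ρ) ϖ i,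
        ‖T - MonoidAlgebra.lift k (V →L[k] V) M ρ f‖ < 1 := by
  set L := MonoidAlgebra.lift k (V →L[k] V) M ρ with hL
  have hϖne : ϖ ≠ 0 := fun h => by simp [h] at hϖ0
  -- base case: elements with integral coefficients map into the unit ball
  have hbase : ∀ f : MonoidAlgebra k M, (∀ m : M, ‖f.coeff m‖ ≤ 1) → ‖L f‖ ≤ 1 := by
    intro f hf
    refine ContinuousLinearMap.opNorm_le_bound _ zero_le_one fun v => ?_
    rw [one_mul]
    have hrepr : L f v = ∑ m ∈ f.coeff.support, (f.coeff m) • (ρ m v) := by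
      rw [MonoidAlgebra.lift_apply, Finsupp.sum]
      simp [ContinuousLinearMap.sum_apply]
    rw [hrepr]
    refine IsUltrametricDist.norm_sum_le_of_forall_le_of_nonneg (norm_nonneg v) fun m _ => ?_
    calc ‖(f.coeff m) • (ρ m v)‖ = ‖f.coeff m‖ * ‖ρ m v‖ := norm_smul _ _
      _ ≤ 1 * (‖ρ m‖ * ‖v‖) :=
          mul_le_mul (hf m) ((ρ m).le_opNorm v) (norm_nonneg _) zero_le_one
      _ ≤ 1 * (1 * ‖v‖) := by
          refine mul_le_mul_of_nonneg_left ?_ zero_le_one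
          exact mul_le_mul_of_nonneg_right (hunit m) (norm_nonneg v)
      _ = ‖v‖ := by ring
  -- discreteness: an operator of norm `< 1` has norm `≤ ‖ϖ‖`
  have hsmall : ∀ T : V →L[k] V, ‖T‖ < 1 → ‖T‖ ≤ ‖ϖ‖ := by
    intro T hT
    refine ContinuousLinearMap.opNorm_le_bound _ hϖ0.le fun v => ?_
    rcases eq_or_ne (T v) 0 with h0 | h0
    · simp [h0, mul_nonneg hϖ0.le (norm_nonneg v)]
    have hv0 : v ≠ 0 := by rintro rfl; simp at h0
    obtain ⟨c, hc⟩ := hcart (T v)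
    obtain ⟨d, hd⟩ := hcart v
    have hcne : c ≠ 0 := by
      intro h; rw [h, norm_zero] at hc; exact h0 (norm_eq_zero.mp hc)
    have hdne : d ≠ 0 := by
      intro h; rw [h, norm_zero] at hd; exact hv0 (norm_eq_zero.mp hd)
    obtain ⟨a, ha⟩ := hdisc c hcne
    obtain ⟨b, hb⟩ := hdisc d hdne
    have hlt : ‖ϖ‖ ^ a < ‖ϖ‖ ^ b := by
      rw [← ha, ← hc, ← hb, ← hd]
      calc ‖T v‖ ≤ ‖T‖ * ‖v‖ := T.le_opNorm v
        _ < 1 * ‖v‖ := by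
            exact mul_lt_mul_of_pos_right hT (norm_pos_iff.mpr hv0)
        _ = ‖v‖ := one_mul _
    have hba : b < a := by
      by_contra hcon
      exact absurd hlt (not_lt.mpr (zpow_le_zpow_right_of_le_one₀ hϖ0 hϖ1.le (not_lt.mp hcon)))
    calc ‖T v‖ = ‖ϖ‖ ^ a := by rw [hc, ha]
      _ ≤ ‖ϖ‖ ^ (b + 1) := zpow_le_zpow_right_of_le_one₀ hϖ0 hϖ1.le hba
      _ = ‖ϖ‖ * ‖ϖ‖ ^ b := by rw [zpow_add₀ hϖ0.ne', zpow_one, mul_comm]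
      _ = ‖ϖ‖ * ‖v‖ := by rw [← hb, ← hd]
  -- forward inclusion: every `Aᵢ` maps into the unit ball
  have hsub : ∀ i, ∀ f ∈ Aseq L ϖ i, ‖L f‖ ≤ 1 := by
    intro i
    induction i with
    | zero => exact fun f hf => hbase f hf
    | succ i ih =>
        rintro f ⟨g, hg, h, hh, hlt, rfl⟩
        have h1 : ‖L (ϖ⁻¹ • h)‖ ≤ 1 := by
          rw [map_smul, norm_smul, norm_inv]
          calc ‖ϖ‖⁻¹ * ‖L h‖ ≤ ‖ϖ‖⁻¹ * ‖ϖ‖ :=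
              mul_le_mul_of_nonneg_left (hsmall _ hlt) (inv_nonneg.mpr hϖ0.le)
            _ = 1 := inv_mul_cancel₀ hϖ0.ne'
        rw [map_add]
        exact (opNorm_add_le_max' _ _).trans (max_le (ih g hg) h1)
  -- reverse inclusion: induction on the size of the coefficients
  have hmem : ∀ n : ℕ, ∀ f : MonoidAlgebra k M, ‖L f‖ ≤ 1 →
      (∀ m : M, ‖f.coeff m‖ ≤ (‖ϖ‖⁻¹) ^ n) → f ∈ Aseq L ϖ n := by
    intro n
    induction n with
    | zero => intro f _ hf; intro m; simpa using hf m
    | succ n ih =>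
        intro f hLf hf
        have hcoeff : ∀ m : M, ‖(ϖ • f).coeff m‖ ≤ (‖ϖ‖⁻¹) ^ n := by
          intro m
          rw [MonoidAlgebra.coeff_smul_apply, norm_smul]
          calc ‖ϖ‖ * ‖f.coeff m‖ ≤ ‖ϖ‖ * (‖ϖ‖⁻¹) ^ (n + 1) :=
              mul_le_mul_of_nonneg_left (hf m) hϖ0.le
            _ = (‖ϖ‖⁻¹) ^ n := by
                rw [pow_succ]
                field_simp
        have hLsmall : ‖L (ϖ • f)‖ < 1 := by
          rw [map_smul, norm_smul]
          calc ‖ϖ‖ * ‖L f‖ ≤ ‖ϖ‖ * 1 := mul_le_mul_of_nonneg_left hLf hϖ0.le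
            _ = ‖ϖ‖ := mul_one _
            _ < 1 := hϖ1
        have hmem' : ϖ • f ∈ Aseq L ϖ n := ih (ϖ • f) (hLsmall.le) hcoeff
        exact ⟨0, Aseq.zero_mem L ϖ n, ϖ • f, hmem', hLsmall, by
          rw [smul_smul, inv_mul_cancel₀ hϖne, one_smul, zero_add]⟩
  have hunion : (⋃ i, Aseq L ϖ i) = {f : MonoidAlgebra k M | ‖L f‖ ≤ 1} := by
    ext f
    simp only [Set.mem_iUnion, Set.mem_setOf_eq]
    constructor
    · rintro ⟨i, hi⟩; exact hsub i f hi
    · intro hf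
      obtain ⟨C, hC⟩ : ∃ C : ℝ, ∀ m : M, ‖f.coeff m‖ ≤ C := by
        refine ⟨((f.coeff.support.sup fun m => ‖f.coeff m‖₊ : NNReal) : ℝ), fun m => ?_⟩
        by_cases hm : m ∈ f.coeff.support
        · exact_mod_cast Finset.le_sup (f := fun m => ‖f.coeff m‖₊) hm
        · simp only [Finsupp.notMem_support_iff.mp hm, norm_zero]
          positivity
      have hinv : 1 < ‖ϖ‖⁻¹ := (one_lt_inv₀ hϖ0).mpr hϖ1
      obtain ⟨n, hn⟩ := pow_unbounded_of_one_lt C hinv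
      exact ⟨n, hmem n f hf fun m => (hC m).trans hn.le⟩
  refine ⟨hunion, ?_⟩
  intro T hT hT1
  obtain ⟨S, hS, hST⟩ := Metric.mem_closure_iff.mp hT 1 one_pos
  obtain ⟨f, rfl⟩ := hS
  rw [dist_eq_norm] at hST
  have hLf : ‖L f‖ ≤ 1 := by
    have : L f = T + (L f - T) := by abel
    rw [this]
    refine (opNorm_add_le_max' _ _).trans (max_le hT1 ?_)
    rw [norm_sub_rev]
    exact hST.le
  have : f ∈ ⋃ i, Aseq L ϖ i := hunion ▸ hLf
  obtain ⟨_, ⟨i, rfl⟩, hi⟩ := this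
  exact ⟨i, f, hi, hST⟩
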